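/- Let W_1,...,W_n be i.i.d. zero-mean random variables with finite sixth moment and X_n = Σ_{i=1}^n W_i. Then E|X_n² - E[X_n²]|³ ≤ C·n³, where C = 2|κ_6| + 60|κ_4|κ_2 + 40κ_3² + 120κ_2³ and κ_i denotes the i-th cumulant of W_1. -/

import Mathlib

open MeasureTheory ProbabilityTheory Finset

open scoped ENNReal
section Helpers

lemma TM_pow_le_one_add_pow_six {c : ℝ} (hc : 0 ≤ c) {p : ℕ} (hp : p ≤ 6) :
    c ^ p ≤ 1 + c ^ 6 := by
  rcases le_total c 1 with h | h
  · have : c ^ p ≤ 1 := pow_le_one₀ hc h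
    nlinarith [pow_nonneg hc 6]
  · have : c ^ p ≤ c ^ 6 := pow_le_pow_right₀ h hp
    linarith

lemma TM_abs_pow_mul_pow_le (a b : ℝ) {j k : ℕ} (h : j + k ≤ 6) :
    |a ^ j * b ^ k| ≤ 1 + a ^ 6 + b ^ 6 := by
  set c := max |a| |b| with hc
  have hc0 : 0 ≤ c := le_trans (abs_nonneg a) (le_max_left _ _)
  have h1 : |a ^ j * b ^ k| ≤ c ^ (j + k) := by
    rw [abs_mul, abs_pow, abs_pow, pow_add]
    exact mul_le_mul (pow_le_pow_left₀ (abs_nonneg a) (le_max_left _ _) j)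
      (pow_le_pow_left₀ (abs_nonneg b) (le_max_right _ _) k) (by positivity) (by positivity)
  have h2 : c ^ (j + k) ≤ 1 + c ^ 6 := TM_pow_le_one_add_pow_six hc0 h
  have h3 : c ^ 6 ≤ a ^ 6 + b ^ 6 := by
    rcases max_cases |a| |b| with ⟨hm, _⟩ | ⟨hm, _⟩ <;> rw [hc, hm]
    · have : |a| ^ 6 = a ^ 6 := by rw [← abs_pow, abs_of_nonneg (by positivity)]
      nlinarith [sq_nonneg (b^3), this]
    · have : |b| ^ 6 = b ^ 6 := by rw [← abs_pow, abs_of_nonneg (by positivity)]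
      nlinarith [sq_nonneg (a^3), this]
  linarith

end Helpers

section Integrab

variable {Ω : Type*} [MeasurableSpace Ω] {μ : Measure Ω}

lemma TM_integrable_abs_pow_six [IsFiniteMeasure μ] {f : Ω → ℝ} (hf : MemLp f 6 μ) :
    Integrable (fun ω => f ω ^ 6) μ := by
  have h := hf.integrable_norm_rpow (by norm_num) (by norm_num)
  have : (fun ω => ‖f ω‖ ^ (6 : ℝ≥0∞).toReal) = fun ω => f ω ^ 6 := by
    funext ω
    rw [show ((6 : ℝ≥0∞).toReal) = ((6 : ℕ) : ℝ) by norm_num, Real.rpow_natCast,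
      Real.norm_eq_abs, ← abs_pow, abs_of_nonneg (by positivity)]
  rwa [this] at h

lemma TM_integrable_pow_mul_pow [IsFiniteMeasure μ] {f g : Ω → ℝ}
    (hfm : Measurable f) (hgm : Measurable g)
    (hf : MemLp f 6 μ) (hg : MemLp g 6 μ) {j k : ℕ} (h : j + k ≤ 6) :
    Integrable (fun ω => f ω ^ j * g ω ^ k) μ := by
  have hb : Integrable (fun ω => 1 + f ω ^ 6 + g ω ^ 6) μ :=
    ((integrable_const 1).add (TM_integrable_abs_pow_six hf)).add (TM_integrable_abs_pow_six hg)
  refine Integrable.mono' hb (((hfm.pow_const j).mul (hgm.pow_const k)).aestronglyMeasurable) ?_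
  filter_upwards with ω
  simpa only [Real.norm_eq_abs] using TM_abs_pow_mul_pow_le (f ω) (g ω) h

lemma TM_integrable_pow [IsFiniteMeasure μ] {f : Ω → ℝ}
    (hfm : Measurable f) (hf : MemLp f 6 μ) {k : ℕ} (h : k ≤ 6) :
    Integrable (fun ω => f ω ^ k) μ := by
  have := TM_integrable_pow_mul_pow (g := f) hfm hfm hf hf (j := k) (k := 0) (by omega)
  simpa using this

end Integrab

section Step

variable {Ω : Type*} [MeasurableSpace Ω] {μ : Measure Ω}

lemma TM_integral_add_pow [IsProbabilityMeasure μ] {S f : Ω → ℝ}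
    (hSm : Measurable S) (hfm : Measurable f)
    (hS6 : MemLp S 6 μ) (hf6 : MemLp f 6 μ)
    (hindep : IndepFun S f μ) {k : ℕ} (hk : k ≤ 6) :
    ∫ ω, (S ω + f ω) ^ k ∂μ
      = ∑ j ∈ Finset.range (k + 1),
          (k.choose j : ℝ) * ((∫ ω, S ω ^ j ∂μ) * ∫ ω, f ω ^ (k - j) ∂μ) := by
  have h1 : (fun ω => (S ω + f ω) ^ k)
      = fun ω => ∑ j ∈ Finset.range (k + 1), S ω ^ j * f ω ^ (k - j) * (k.choose j : ℝ) := by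
    funext ω; exact add_pow _ _ _
  rw [h1, integral_finset_sum]
  · refine Finset.sum_congr rfl fun j hj => ?_
    have hjk : j + (k - j) ≤ 6 := by
      have := Finset.mem_range.mp hj; omega
    have hind : IndepFun (fun ω => S ω ^ j) (fun ω => f ω ^ (k - j)) μ :=
      hindep.comp (measurable_id.pow_const j) (measurable_id.pow_const (k - j))
    rw [integral_mul_const]
    rw [show (fun ω => S ω ^ j * f ω ^ (k - j)) = (fun ω => S ω ^ j) * fun ω => f ω ^ (k - j) from rfl] at *
    rw [IndepFun.integral_mul_eq_mul_integral hind ((hSm.pow_const j).aestronglyMeasurable)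
      ((hfm.pow_const (k - j)).aestronglyMeasurable)]
    ring
  · intro j hj
    have hjk : j + (k - j) ≤ 6 := by
      have := Finset.mem_range.mp hj; omega
    exact (TM_integrable_pow_mul_pow hSm hfm hS6 hf6 hjk).mul_const _

end Step

section Moments

variable {Ω : Type*} [MeasurableSpace Ω] {μ : Measure Ω}

lemma TM_moments [IsProbabilityMeasure μ] {ι : Type*} {W : ι → Ω → ℝ}
    (hmeas : ∀ i, Measurable (W i))
    (hindep : iIndepFun W μ)
    (m : ℕ → ℝ)
    (hL6 : ∀ i, MemLp (W i) 6 μ)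
    (hM : ∀ i, ∀ k, k ≤ 6 → ∫ ω, W i ω ^ k ∂μ = m k)
    (hm1 : m 1 = 0) (s : Finset ι) :
    (∫ ω, (∑ i ∈ s, W i ω) ∂μ = 0) ∧
    (∫ ω, (∑ i ∈ s, W i ω) ^ 2 ∂μ = s.card * m 2) ∧
    (∫ ω, (∑ i ∈ s, W i ω) ^ 3 ∂μ = s.card * m 3) ∧
    (∫ ω, (∑ i ∈ s, W i ω) ^ 4 ∂μ
       = s.card * m 4 + 3 * s.card * (s.card - 1) * m 2 ^ 2) ∧
    (∫ ω, (∑ i ∈ s, W i ω) ^ 5 ∂μ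
       = s.card * m 5 + 10 * s.card * (s.card - 1) * m 3 * m 2) ∧
    (∫ ω, (∑ i ∈ s, W i ω) ^ 6 ∂μ
       = s.card * m 6 + 15 * s.card * (s.card - 1) * m 4 * m 2
         + 10 * s.card * (s.card - 1) * m 3 ^ 2
         + 15 * s.card * (s.card - 1) * (s.card - 2) * m 2 ^ 3) := by
  classical
  induction s using Finset.induction_on with
  | empty => simp
  | insert a s ha ih =>
    obtain ⟨ih1, ih2, ih3, ih4, ih5, ih6⟩ := ih
    have hSm : Measurable fun ω => ∑ i ∈ s, W i ω :=
      Finset.measurable_sum s fun i _ => hmeas i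
    have hS6 : MemLp (fun ω => ∑ i ∈ s, W i ω) 6 μ :=
      memLp_finset_sum s fun i _ => hL6 i
    have hind : IndepFun (fun ω => ∑ i ∈ s, W i ω) (W a) μ := by
      have h := hindep.indepFun_finset_sum_of_notMem hmeas ha
      have : (∑ j ∈ s, W j) = fun ω => ∑ i ∈ s, W i ω := by
        funext ω; simp [Finset.sum_apply]
      rwa [this] at h
    have hm0 : m 0 = 1 := by
      have h := hM a 0 (by norm_num); simpa using h.symm
    have hrw : ∀ ω, ∑ i ∈ insert a s, W i ω = (∑ i ∈ s, W i ω) + W a ω := by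
      intro ω; rw [Finset.sum_insert ha]; ring
    have hS1 : ∫ ω, (∑ i ∈ s, W i ω) ^ 1 ∂μ = 0 := by simpa using ih1
    have hS0 : ∫ ω, (∑ i ∈ s, W i ω) ^ 0 ∂μ = 1 := by simp
    have hcard : ((insert a s).card : ℝ) = (s.card : ℝ) + 1 := by
      rw [Finset.card_insert_of_notMem ha]; push_cast; ring
    have key : ∀ k : ℕ, k ≤ 6 → ∫ ω, (∑ i ∈ insert a s, W i ω) ^ k ∂μ
        = ∑ j ∈ Finset.range (k + 1),
            (k.choose j : ℝ) * ((∫ ω, (∑ i ∈ s, W i ω) ^ j ∂μ) * m (k - j)) := by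
      intro k hk
      have := TM_integral_add_pow hSm (hmeas a) hS6 (hL6 a) hind hk
      simp only [hrw]
      rw [this]
      refine Finset.sum_congr rfl fun j hj => ?_
      rw [hM a (k - j) (by omega)]
    refine ⟨?_, ?_, ?_, ?_, ?_, ?_⟩
    · have h := key 1 (by norm_num)
      simp only [Finset.sum_range_succ, Finset.sum_range_zero] at h
      norm_num [hS0, hS1, ih1, hm1, hm0] at h
      simpa using h
    · have h := key 2 (by norm_num)
      simp only [Finset.sum_range_succ, Finset.sum_range_zero] at h
      norm_num [Nat.choose, hS0, hS1, ih1, hm1, hm0, ih2] at h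
      rw [h, hcard]; ring
    · have h := key 3 (by norm_num)
      simp only [Finset.sum_range_succ, Finset.sum_range_zero] at h
      norm_num [Nat.choose, hS0, hS1, ih1, hm1, hm0, ih2, ih3] at h
      rw [h, hcard]; ring
    · have h := key 4 (by norm_num)
      simp only [Finset.sum_range_succ, Finset.sum_range_zero] at h
      norm_num [Nat.choose, hS0, hS1, ih1, hm1, hm0, ih2, ih3, ih4] at h
      rw [h, hcard]; ring
    · have h := key 5 (by norm_num)
      simp only [Finset.sum_range_succ, Finset.sum_range_zero] at h
      norm_num [Nat.choose, hS0, hS1, ih1, hm1, hm0, ih2, ih3, ih4, ih5] at h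
      rw [h, hcard]; ring
    · have h := key 6 (by norm_num)
      simp only [Finset.sum_range_succ, Finset.sum_range_zero] at h
      norm_num [Nat.choose, hS0, hS1, ih1, hm1, hm0, ih2, ih3, ih4, ih5, ih6] at h
      rw [h, hcard]; ring

end Moments

lemma TM_key_pointwise (x y : ℝ) :
    |x ^ 2 - y ^ 2| ^ 3 ≤ x ^ 6 + 15 * x ^ 4 * y ^ 2 + 15 * x ^ 2 * y ^ 4 + y ^ 6 := by
  have h1 : |x ^ 2 - y ^ 2| ≤ x ^ 2 + y ^ 2 := by
    calc |x ^ 2 - y ^ 2| ≤ |x ^ 2| + |y ^ 2| := abs_sub _ _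
    _ = x ^ 2 + y ^ 2 := by
      rw [abs_of_nonneg (sq_nonneg x), abs_of_nonneg (sq_nonneg y)]
  have h2 : |x ^ 2 - y ^ 2| ^ 3 = (x ^ 2 - y ^ 2) ^ 2 * |x ^ 2 - y ^ 2| := by
    rw [show |x ^ 2 - y ^ 2| ^ 3 = |x ^ 2 - y ^ 2| ^ 2 * |x ^ 2 - y ^ 2| from by ring, sq_abs]
  rw [h2]
  have h3 : (x ^ 2 - y ^ 2) ^ 2 * |x ^ 2 - y ^ 2| ≤ (x ^ 2 - y ^ 2) ^ 2 * (x ^ 2 + y ^ 2) :=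
    mul_le_mul_of_nonneg_left h1 (sq_nonneg _)
  nlinarith [mul_nonneg (sq_nonneg (x * y)) (sq_nonneg x),
    mul_nonneg (sq_nonneg (x * y)) (sq_nonneg y)]

/-- Let `W 1, ..., W n` be i.i.d. zero-mean random variables with
finite sixth moment and `Xₙ = ∑ i, W i`. Then
`E|Xₙ² - E[Xₙ²]|³ ≤ C n³`, where `C = 2|κ₆| + 60|κ₄|κ₂ + 40κ₃² + 120κ₂³` and the
cumulants of the zero-mean variable `W 1` are expressed via its moments:
`κ₂ = m₂`, `κ₃ = m₃`, `κ₄ = m₄ - 3m₂²`, `κ₆ = m₆ - 15 m₄ m₂ - 10 m₃² + 30 m₂³`. -/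
theorem third_central_moment_of_square_sum
    {Ω : Type*} [MeasurableSpace Ω] (μ : Measure Ω) [IsProbabilityMeasure μ]
    (n : ℕ) (hn : 0 < n) (W : Fin n → Ω → ℝ)
    (hWmeas : ∀ i, Measurable (W i))
    (hindep : iIndepFun W μ)
    (hid : ∀ i, IdentDistrib (W i) (W ⟨0, hn⟩) μ μ)
    (hL6 : MemLp (W ⟨0, hn⟩) 6 μ)
    (hmean : ∫ ω, W ⟨0, hn⟩ ω ∂μ = 0)
    (m : ℕ → ℝ) (hm : ∀ k, m k = ∫ ω, (W ⟨0, hn⟩ ω) ^ k ∂μ) :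
    ∫ ω, |(∑ i, W i ω) ^ 2 - ∫ ω', (∑ i, W i ω') ^ 2 ∂μ| ^ 3 ∂μ
      ≤ (2 * |m 6 - 15 * m 4 * m 2 - 10 * (m 3) ^ 2 + 30 * (m 2) ^ 3|
          + 60 * |m 4 - 3 * (m 2) ^ 2| * m 2
          + 40 * (m 3) ^ 2
          + 120 * (m 2) ^ 3) * n ^ 3 := by
  have hXm : Measurable fun ω => ∑ i, W i ω :=
    Finset.measurable_sum _ fun i _ => hWmeas i
  have hW6 : ∀ i, MemLp (W i) 6 μ := fun i => (hid i).symm.memLp_snd hL6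
  have hX6 : MemLp (fun ω => ∑ i, W i ω) 6 μ := memLp_finset_sum _ fun i _ => hW6 i
  have hMk : ∀ i, ∀ k, k ≤ 6 → ∫ ω, W i ω ^ k ∂μ = m k := by
    intro i k _
    have h := ((hid i).comp (measurable_id.pow_const k)).integral_eq
    rw [hm k]
    exact h
  have hm1 : m 1 = 0 := by rw [hm 1]; simpa using hmean
  have hm2 : 0 ≤ m 2 := by
    rw [hm 2]; exact integral_nonneg fun ω => sq_nonneg _
  obtain ⟨h1, h2, h3, h4, h5, h6⟩ := TM_moments hWmeas hindep m hW6 hMk hm1 Finset.univ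
  have hcard : (((Finset.univ : Finset (Fin n)).card : ℝ)) = (n : ℝ) := by simp
  rw [hcard] at h2 h4 h6
  set N : ℝ := (n : ℝ) with hN
  have hN1 : (1 : ℝ) ≤ N := by
    have : 1 ≤ n := hn
    rw [hN]; exact_mod_cast this
  set M2 : ℝ := ∫ ω, (∑ i, W i ω) ^ 2 ∂μ with hM2
  set M4 : ℝ := ∫ ω, (∑ i, W i ω) ^ 4 ∂μ with hM4
  set M6 : ℝ := ∫ ω, (∑ i, W i ω) ^ 6 ∂μ with hM6
  have hint2 : Integrable (fun ω => (∑ i, W i ω) ^ 2) μ :=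
    TM_integrable_pow hXm hX6 (by norm_num)
  have hint4 : Integrable (fun ω => (∑ i, W i ω) ^ 4) μ :=
    TM_integrable_pow hXm hX6 (by norm_num)
  have hint6 : Integrable (fun ω => (∑ i, W i ω) ^ 6) μ :=
    TM_integrable_pow hXm hX6 (by norm_num)
  -- pointwise bound
  have hptw : ∀ ω, |(∑ i, W i ω) ^ 2 - M2| ^ 3
      ≤ (∑ i, W i ω) ^ 6 + 15 * (∑ i, W i ω) ^ 4 * M2
        + 15 * (∑ i, W i ω) ^ 2 * M4 + M6 := by
    intro ω
    set x : ℝ := ∑ i, W i ω with hx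
    have hA : x ^ 2 - M2 = ∫ ω', (x ^ 2 - (∑ i, W i ω') ^ 2) ∂μ := by
      rw [integral_sub (integrable_const _) hint2, integral_const]
      simp [hM2]
    have hBint : Integrable (fun ω' => |x ^ 2 - (∑ i, W i ω') ^ 2|) μ :=
      ((integrable_const (x ^ 2)).sub hint2).abs
    have hRHSint : Integrable (fun ω' => x ^ 6 + 15 * x ^ 4 * (∑ i, W i ω') ^ 2
        + 15 * x ^ 2 * (∑ i, W i ω') ^ 4 + (∑ i, W i ω') ^ 6) μ := by
      exact (((integrable_const _).add (hint2.const_mul _)).add (hint4.const_mul _)).add hint6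
    have hCube : Integrable (fun ω' => |x ^ 2 - (∑ i, W i ω') ^ 2| ^ 3) μ := by
      refine hRHSint.mono' ?_ ?_
      · exact (((measurable_const.sub (hXm.pow_const 2)).abs.pow_const 3)).aestronglyMeasurable
      · filter_upwards with ω'
        rw [Real.norm_eq_abs, abs_of_nonneg (by positivity)]
        exact TM_key_pointwise x (∑ i, W i ω')
    have hJensen : (∫ ω', |x ^ 2 - (∑ i, W i ω') ^ 2| ∂μ) ^ 3
        ≤ ∫ ω', |x ^ 2 - (∑ i, W i ω') ^ 2| ^ 3 ∂μ := by
      have hconv := (convexOn_pow (𝕜 := ℝ) 3).map_integral_le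
        (f := fun ω' => |x ^ 2 - (∑ i, W i ω') ^ 2|) (μ := μ)
        ((continuous_pow 3).continuousOn) isClosed_Ici
        (Filter.Eventually.of_forall fun ω' => Set.mem_Ici.mpr (abs_nonneg _)) hBint ?_
      · exact hconv
      · exact hCube
    have habs : |x ^ 2 - M2| ≤ ∫ ω', |x ^ 2 - (∑ i, W i ω') ^ 2| ∂μ := by
      rw [hA, ← Real.norm_eq_abs]
      refine (norm_integral_le_integral_norm _).trans (le_of_eq ?_)
      simp [Real.norm_eq_abs]
    calc |x ^ 2 - M2| ^ 3
        ≤ (∫ ω', |x ^ 2 - (∑ i, W i ω') ^ 2| ∂μ) ^ 3 :=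
          pow_le_pow_left₀ (abs_nonneg _) habs 3
      _ ≤ ∫ ω', |x ^ 2 - (∑ i, W i ω') ^ 2| ^ 3 ∂μ := hJensen
      _ ≤ ∫ ω', (x ^ 6 + 15 * x ^ 4 * (∑ i, W i ω') ^ 2
            + 15 * x ^ 2 * (∑ i, W i ω') ^ 4 + (∑ i, W i ω') ^ 6) ∂μ := by
          refine integral_mono hCube hRHSint fun ω' => TM_key_pointwise x _
      _ = x ^ 6 + 15 * x ^ 4 * M2 + 15 * x ^ 2 * M4 + M6 := by
          have iA : Integrable (fun ω' => x ^ 6 + 15 * x ^ 4 * (∑ i, W i ω') ^ 2) μ :=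
            (integrable_const _).add (hint2.const_mul _)
          have iB : Integrable (fun ω' => x ^ 6 + 15 * x ^ 4 * (∑ i, W i ω') ^ 2
              + 15 * x ^ 2 * (∑ i, W i ω') ^ 4) μ := iA.add (hint4.const_mul _)
          rw [integral_add iB hint6, integral_add iA (hint4.const_mul _),
            integral_add (integrable_const _) (hint2.const_mul _),
            integral_const_mul, integral_const_mul, integral_const, ← hM2, ← hM4, ← hM6]
          simp
  -- integrate the pointwise bound
  have hmain : ∫ ω, |(∑ i, W i ω) ^ 2 - M2| ^ 3 ∂μ ≤ 2 * M6 + 30 * M4 * M2 := by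
    have hR : Integrable (fun ω => (∑ i, W i ω) ^ 6 + 15 * (∑ i, W i ω) ^ 4 * M2
        + 15 * (∑ i, W i ω) ^ 2 * M4 + M6) μ := by
      exact ((hint6.add ((hint4.const_mul 15).mul_const M2)).add
        ((hint2.const_mul 15).mul_const M4)).add (integrable_const _)
    calc ∫ ω, |(∑ i, W i ω) ^ 2 - M2| ^ 3 ∂μ
        ≤ ∫ ω, ((∑ i, W i ω) ^ 6 + 15 * (∑ i, W i ω) ^ 4 * M2
            + 15 * (∑ i, W i ω) ^ 2 * M4 + M6) ∂μ := by
          refine integral_mono_of_nonneg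
            (Filter.Eventually.of_forall fun ω => by positivity) hR
            (Filter.Eventually.of_forall fun ω => hptw ω)
      _ = M6 + 15 * M4 * M2 + 15 * M2 * M4 + M6 := by
          have iC : Integrable (fun ω => (∑ i, W i ω) ^ 6
              + 15 * (∑ i, W i ω) ^ 4 * M2) μ :=
            hint6.add ((hint4.const_mul 15).mul_const M2)
          have iD : Integrable (fun ω => (∑ i, W i ω) ^ 6 + 15 * (∑ i, W i ω) ^ 4 * M2
              + 15 * (∑ i, W i ω) ^ 2 * M4) μ := iC.add ((hint2.const_mul 15).mul_const M4)
          rw [integral_add iD (integrable_const _), integral_add iC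
              ((hint2.const_mul 15).mul_const M4),
            integral_add hint6 ((hint4.const_mul 15).mul_const M2),
            integral_mul_const, integral_mul_const,
            integral_const_mul, integral_const_mul, integral_const, ← hM2, ← hM4, ← hM6]
          simp
      _ = 2 * M6 + 30 * M4 * M2 := by ring
  -- final algebra
  set κ6 : ℝ := m 6 - 15 * m 4 * m 2 - 10 * m 3 ^ 2 + 30 * m 2 ^ 3 with hκ6
  set κ4 : ℝ := m 4 - 3 * m 2 ^ 2 with hκ4
  have hsum : 2 * M6 + 30 * M4 * M2
      = 2 * N * κ6 + 60 * N ^ 2 * κ4 * m 2 + 20 * N ^ 2 * m 3 ^ 2 + 120 * N ^ 3 * m 2 ^ 3 := by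
    rw [h6, h4, h2, hκ6, hκ4]; ring
  have hfinal : 2 * N * κ6 + 60 * N ^ 2 * κ4 * m 2 + 20 * N ^ 2 * m 3 ^ 2
      + 120 * N ^ 3 * m 2 ^ 3
      ≤ (2 * |κ6| + 60 * |κ4| * m 2 + 40 * m 3 ^ 2 + 120 * m 2 ^ 3) * N ^ 3 := by
    have hN0 : 0 < N := by linarith
    have hN3 : N ≤ N ^ 3 := by nlinarith
    have hN23 : N ^ 2 ≤ N ^ 3 := by nlinarith
    have t1 : 2 * N * κ6 ≤ 2 * N ^ 3 * |κ6| := by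
      have : N * κ6 ≤ N ^ 3 * |κ6| := by
        calc N * κ6 ≤ N * |κ6| := by
              exact mul_le_mul_of_nonneg_left (le_abs_self _) (le_of_lt hN0)
          _ ≤ N ^ 3 * |κ6| := mul_le_mul_of_nonneg_right hN3 (abs_nonneg _)
      linarith
    have t2 : 60 * N ^ 2 * κ4 * m 2 ≤ 60 * N ^ 3 * (|κ4| * m 2) := by
      have h1 : κ4 * m 2 ≤ |κ4| * m 2 := mul_le_mul_of_nonneg_right (le_abs_self _) hm2
      have h2' : N ^ 2 * (κ4 * m 2) ≤ N ^ 2 * (|κ4| * m 2) :=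
        mul_le_mul_of_nonneg_left h1 (by positivity)
      have h3' : N ^ 2 * (|κ4| * m 2) ≤ N ^ 3 * (|κ4| * m 2) :=
        mul_le_mul_of_nonneg_right hN23 (by positivity)
      linarith
    have t3 : 20 * N ^ 2 * m 3 ^ 2 ≤ 40 * N ^ 3 * m 3 ^ 2 := by
      have h9 : N ^ 2 * m 3 ^ 2 ≤ N ^ 3 * m 3 ^ 2 :=
        mul_le_mul_of_nonneg_right hN23 (sq_nonneg _)
      have h10 : 0 ≤ N ^ 3 * m 3 ^ 2 := mul_nonneg (by positivity) (sq_nonneg _)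
      linarith
    linarith [t1, t2, t3]
  calc ∫ ω, |(∑ i, W i ω) ^ 2 - M2| ^ 3 ∂μ ≤ 2 * M6 + 30 * M4 * M2 := hmain
    _ = 2 * N * κ6 + 60 * N ^ 2 * κ4 * m 2 + 20 * N ^ 2 * m 3 ^ 2 + 120 * N ^ 3 * m 2 ^ 3 :=
        hsum
    _ ≤ (2 * |κ6| + 60 * |κ4| * m 2 + 40 * m 3 ^ 2 + 120 * m 2 ^ 3) * N ^ 3 := hfinal
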